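/- If every clause of a quantifier-free formula φ over τ ∪ ρ contains only negative τ-literals, then the class of finite τ-structures A such that some ρ-expansion of A satisfies ∀x̄ φ is closed under inverse homomorphisms: if B is in the class and A → B, then A is in the class. -/

import Mathlib

structure Sig : Type 1 where
  symb : Type
  ar : symb → ℕ

structure Str (σ : Sig) : Type 1 where
  dom : Type
  rel : ∀ s : σ.symb, Set ((Fin (σ.ar s)) → dom)

def IsHom {σ : Sig} (A B : Str σ) (h : A.dom → B.dom) : Prop :=
  ∀ s t, t ∈ A.rel s → (h ∘ t) ∈ B.rel s

def HomTo {σ : Sig} (A B : Str σ) : Prop := ∃ h, IsHom A B h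

def IsEmb {σ : Sig} (A B : Str σ) (h : A.dom → B.dom) : Prop :=
  Function.Injective h ∧ ∀ s t, t ∈ A.rel s ↔ (h ∘ t) ∈ B.rel s

def EmbTo {σ : Sig} (A B : Str σ) : Prop := ∃ h, IsEmb A B h

def IsoTo {σ : Sig} (A B : Str σ) : Prop := ∃ h, IsEmb A B h ∧ Function.Surjective h

def disjUnion {σ : Sig} (A B : Str σ) : Str σ where
  dom := A.dom ⊕ B.dom
  rel := fun s => {t | (∃ u ∈ A.rel s, t = Sum.inl ∘ u) ∨ (∃ u ∈ B.rel s, t = Sum.inr ∘ u)}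

def Sig.sum (τ ρ : Sig) : Sig := ⟨τ.symb ⊕ ρ.symb, Sum.elim τ.ar ρ.ar⟩

def expand {τ ρ : Sig} (A : Str τ) (I : ∀ s : ρ.symb, Set ((Fin (ρ.ar s)) → A.dom)) :
    Str (Sig.sum τ ρ) where
  dom := A.dom
  rel := fun s => match s with
    | Sum.inl s => A.rel s
    | Sum.inr s => I s

structure Atom (σ : Sig) (n : ℕ) where
  sym : σ.symb
  args : Fin (σ.ar sym) → Fin n

structure Lit (σ : Sig) (n : ℕ) where
  atom : Atom σ n
  pos : Bool

abbrev Clause (σ : Sig) (n : ℕ) := List (Lit σ n)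

abbrev CNF (σ : Sig) (n : ℕ) := List (Clause σ n)

def Atom.eval {σ : Sig} {n : ℕ} (a : Atom σ n) (A : Str σ) (v : Fin n → A.dom) : Prop :=
  (fun i => v (a.args i)) ∈ A.rel a.sym

def Lit.eval {σ : Sig} {n : ℕ} (l : Lit σ n) (A : Str σ) (v : Fin n → A.dom) : Prop :=
  if l.pos then l.atom.eval A v else ¬ l.atom.eval A v

def Clause.sat {σ : Sig} {n : ℕ} (c : Clause σ n) (A : Str σ) (v : Fin n → A.dom) : Prop :=
  ∃ l ∈ c, l.eval A v

def CNF.models {σ : Sig} {n : ℕ} (φ : CNF σ n) (A : Str σ) : Prop :=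
  ∀ (v : Fin n → A.dom), ∀ c ∈ φ, c.sat A v

def Lit.vars {σ : Sig} {n : ℕ} (l : Lit σ n) : Set (Fin n) := Set.range l.atom.args

def Clause.vars {σ : Sig} {n : ℕ} (c : Clause σ n) : Set (Fin n) :=
  {x | ∃ l ∈ c, x ∈ l.vars}

def Clause.Connected {σ : Sig} {n : ℕ} (c : Clause σ n) : Prop :=
  ∀ X₁ X₂ : Set (Fin n), X₁ ∪ X₂ = c.vars → Disjoint X₁ X₂ →
    X₁.Nonempty → X₂.Nonempty →
    ∃ l ∈ c, l.pos = false ∧ (∃ x ∈ l.vars, x ∈ X₁) ∧ (∃ x ∈ l.vars, x ∈ X₂)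

theorem stmt12 (τ ρ : Sig) (n : ℕ) (φ : CNF (Sig.sum τ ρ) n)
    (hmono : ∀ c ∈ φ, ∀ l ∈ c, l.atom.sym.isLeft → l.pos = false)
    (A B : Str τ) (h : A.dom → B.dom) (hh : IsHom A B h)
    (hBe : ∃ I, CNF.models φ (expand B I)) :
    ∃ I, CNF.models φ (expand A I) := by
  obtain ⟨I, hI⟩ := hBe
  refine ⟨fun s => {t | (h ∘ t) ∈ I s}, ?_⟩
  intro v c hc
  obtain ⟨l, hl, hle⟩ := hI (h ∘ v) c hc
  refine ⟨l, hl, ?_⟩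
  have hm := hmono c hc l hl
  obtain ⟨⟨sym, args⟩, pos⟩ := l
  unfold Lit.eval Atom.eval at *
  simp only at *
  rcases sym with s | s
  · have hpos : pos = false := hm rfl
    subst hpos
    simp only [if_neg Bool.false_ne_true] at hle ⊢
    exact fun hmem => hle (hh s _ hmem)
  · rcases pos
    · simp only [if_neg Bool.false_ne_true] at hle ⊢
      exact hle
    · exact hle
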